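/- Define g1(X0, Y0) = −π (X0² + 3 Y0² − 8(2 − √2)) / (8 (2 − √2)^{3/2}) and g2(X0, Y0) = −π X0 Y0 / (4 (2 − √2)^{3/2}). Then the system g1 = g2 = 0 has exactly four real solutions, namely (X0, Y0) = (± 2√(2(2 − √2)), 0) and (X0, Y0) = (0, ± 2√((2/3)(2 − √2))), and at each of these four solutions the Jacobian determinant ∂(g1, g2)/∂(X0, Y0) is nonzero (i.e., all four are simple zeros). -/

import Mathlib

open Real

private lemma detL (A B C D : ℝ) :
    LinearMap.det
      (((A • ContinuousLinearMap.fst ℝ ℝ ℝ + B • ContinuousLinearMap.snd ℝ ℝ ℝ).prod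
        (C • ContinuousLinearMap.fst ℝ ℝ ℝ + D • ContinuousLinearMap.snd ℝ ℝ ℝ)
        : ℝ × ℝ →L[ℝ] ℝ × ℝ) : (ℝ × ℝ) →ₗ[ℝ] ℝ × ℝ) = A * D - B * C := by
  rw [← LinearMap.det_toMatrix (Module.Basis.finTwoProd ℝ), Matrix.det_fin_two]
  simp [LinearMap.toMatrix_apply, Module.Basis.finTwoProd_zero, Module.Basis.finTwoProd_one,
    Module.Basis.coe_finTwoProd_repr]

private lemma hasF (a b e m x y : ℝ) :
    HasFDerivAt (fun p : ℝ × ℝ => (a * p.1 ^ 2 + b * p.2 ^ 2 + e, m * (p.1 * p.2)))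
      (((2 * a * x) • ContinuousLinearMap.fst ℝ ℝ ℝ +
        (2 * b * y) • ContinuousLinearMap.snd ℝ ℝ ℝ).prod
       ((m * y) • ContinuousLinearMap.fst ℝ ℝ ℝ +
        (m * x) • ContinuousLinearMap.snd ℝ ℝ ℝ)) (x, y) := by
  simp only [pow_two]
  have hf : HasFDerivAt (fun p : ℝ × ℝ => p.1) (ContinuousLinearMap.fst ℝ ℝ ℝ) (x, y) :=
    hasFDerivAt_fst
  have hs : HasFDerivAt (fun p : ℝ × ℝ => p.2) (ContinuousLinearMap.snd ℝ ℝ ℝ) (x, y) :=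
    hasFDerivAt_snd
  have h1 := (((hf.mul hf).const_mul a).add ((hs.mul hs).const_mul b)).add_const e
  have h2 := (hf.mul hs).const_mul m
  exact (HasFDerivAt.prodMk h1 h2).congr_fderiv (by ext v <;> simp <;> ring)
set_option maxHeartbeats 1000000 in
/-- The system `g1 = g2 = 0` arising in Corollary 1 has exactly four real
solutions, all of them simple zeros. -/
theorem simple_zeros_corollary1
    (g : ℝ × ℝ → ℝ × ℝ)
    (hg : ∀ X0 Y0 : ℝ, g (X0, Y0) =
      (-(π * (X0 ^ 2 + 3 * Y0 ^ 2 - 8 * (2 - Real.sqrt 2)) /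
          (8 * (2 - Real.sqrt 2) ^ ((3:ℝ) / 2))),
       -(π * X0 * Y0 / (4 * (2 - Real.sqrt 2) ^ ((3:ℝ) / 2))))) :
    (∀ X0 Y0 : ℝ, g (X0, Y0) = (0, 0) ↔
      ((X0, Y0) = (2 * Real.sqrt (2 * (2 - Real.sqrt 2)), 0) ∨
       (X0, Y0) = (-(2 * Real.sqrt (2 * (2 - Real.sqrt 2))), 0) ∨
       (X0, Y0) = (0, 2 * Real.sqrt (2 / 3 * (2 - Real.sqrt 2))) ∨
       (X0, Y0) = (0, -(2 * Real.sqrt (2 / 3 * (2 - Real.sqrt 2)))))) ∧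
    (∀ z : ℝ × ℝ,
      (z = (2 * Real.sqrt (2 * (2 - Real.sqrt 2)), 0) ∨
       z = (-(2 * Real.sqrt (2 * (2 - Real.sqrt 2))), 0) ∨
       z = (0, 2 * Real.sqrt (2 / 3 * (2 - Real.sqrt 2))) ∨
       z = (0, -(2 * Real.sqrt (2 / 3 * (2 - Real.sqrt 2))))) →
      LinearMap.det ((fderiv ℝ g z) : (ℝ × ℝ) →ₗ[ℝ] ℝ × ℝ) ≠ 0) := by
  set c : ℝ := 2 - Real.sqrt 2 with hc_def
  have hsqrt2 : Real.sqrt 2 < 2 := by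
    nlinarith [Real.sq_sqrt (by norm_num : (0:ℝ) ≤ 2), Real.sqrt_nonneg 2]
  have hc : 0 < c := by rw [hc_def]; linarith
  set K : ℝ := c ^ ((3:ℝ) / 2) with hK_def
  have hK : 0 < K := Real.rpow_pos_of_pos hc _
  have hK' : K ≠ 0 := ne_of_gt hK
  have hπ : π ≠ 0 := Real.pi_ne_zero
  set s : ℝ := 2 * Real.sqrt (2 * c) with hs_def
  set t : ℝ := 2 * Real.sqrt (2 / 3 * c) with ht_def
  have hs2 : s ^ 2 = 8 * c := by
    rw [hs_def, mul_pow, sq_sqrt (by linarith)]; ring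
  have ht2 : 3 * t ^ 2 = 8 * c := by
    rw [ht_def, mul_pow, sq_sqrt (by linarith)]; ring
  have hs0 : 0 < s := by
    exact mul_pos two_pos (Real.sqrt_pos.mpr (by linarith))
  have ht0 : 0 < t := by
    exact mul_pos two_pos (Real.sqrt_pos.mpr (by linarith))
  clear_value s t K c
  have hG : g = fun p : ℝ × ℝ =>
      ((-(π / (8 * K))) * p.1 ^ 2 + (-(3 * π / (8 * K))) * p.2 ^ 2 + π * c / K,
       (-(π / (4 * K))) * (p.1 * p.2)) := by
    funext p
    obtain ⟨X, Y⟩ := p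
    rw [hg]
    simp only [Prod.mk.injEq]
    constructor <;> ring
  constructor
  · intro X Y
    rw [hG]
    simp only [Prod.mk.injEq]
    constructor
    · rintro ⟨h1, h2⟩
      have hXY : X * Y = 0 := by
        have := h2
        field_simp at this
        exact (mul_eq_zero.mp (by linear_combination -this : π * (X * Y) = 0)).resolve_left hπ
      have hS : X ^ 2 + 3 * Y ^ 2 = 8 * c := by
        have := h1
        field_simp at this
        nlinarith [this, Real.pi_pos, mul_pos hK hK,
          mul_pos Real.pi_pos (mul_pos hK hK)]
      rcases mul_eq_zero.mp hXY with hX | hY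
      · right; right
        have h3 : 3 * Y ^ 2 = 3 * t ^ 2 := by rw [ht2]; nlinarith
        have h4 : (Y - t) * (Y + t) = 0 := by nlinarith
        rcases mul_eq_zero.mp h4 with h | h
        · left; exact ⟨hX, by linarith⟩
        · right; exact ⟨hX, by linarith⟩
      · have h3 : X ^ 2 = s ^ 2 := by rw [hs2]; nlinarith
        have h4 : (X - s) * (X + s) = 0 := by nlinarith
        rcases mul_eq_zero.mp h4 with h | h
        · left; exact ⟨by linarith, hY⟩
        · right; left; exact ⟨by linarith, hY⟩
    · rintro (⟨rfl, rfl⟩ | ⟨rfl, rfl⟩ | ⟨rfl, rfl⟩ | ⟨rfl, rfl⟩) <;>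
        constructor <;>
        first
          | ring1
          | linear_combination (-(π / (8 * K))) * hs2
          | linear_combination (-(π / (8 * K))) * ht2
  · intro z hz
    rcases hz with rfl | rfl | rfl | rfl <;>
        rw [hG, (hasF (-(π / (8 * K))) (-(3 * π / (8 * K))) (π * c / K)
          (-(π / (4 * K))) _ _).fderiv, detL] <;>
      · intro h
        field_simp at h
        nlinarith [mul_pos (mul_pos Real.pi_pos Real.pi_pos) (mul_pos hs0 hs0),
          mul_pos (mul_pos Real.pi_pos Real.pi_pos) (mul_pos ht0 ht0)]
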